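/- Let A₀ be a densely defined, closed linear operator in H with A₀ + t₀I of positive-type and A₀ + t₀I ∈ Sect(ω₀), and let z, z₁ ∈ ℂ \ closure(−t₀ + S_{ω₀}) with |z − z₁| < ‖(A₀ − z₁I)^{-1}‖^{-1}. Then B := I + (z₁ − z)(A₀ − z₁I)^{-1} is of positive-type and its inverse square root admits the norm-convergent expansion B^{-1/2} = (1/π)∫₀^∞ t^{-1/2}[(1+t)I + (z₁−z)(A₀ − z₁I)^{-1}]^{-1} dt = Σ_{m=0}^∞ [Γ(m + 1/2)/(Γ(m+1)Γ(1/2))] (−1)^m (z₁ − z)^m (A₀ − z₁I)^{-m}; in particular, z ↦ B^{-1/2} is analytic in operator norm on this disk. -/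

import Mathlib

open MeasureTheory Filter
open scoped InnerProductSpace

noncomputable section
open scoped Classical


variable {H : Type*} [NormedAddCommGroup H] [InnerProductSpace ℂ H] [CompleteSpace H]

/-- `T` is the (bounded, everywhere defined) inverse of `A - z·I`. -/
def IsResolvent (A : H →ₗ.[ℂ] H) (z : ℂ) (T : H →L[ℂ] H) : Prop :=
  (∀ x : H, ∃ hx : T x ∈ A.domain, A ⟨T x, hx⟩ - z • T x = x) ∧
  ∀ u : A.domain, T (A u - z • (u : H)) = (u : H)

/-- The resolvent set of an unbounded operator. -/
def resolventSetP (A : H →ₗ.[ℂ] H) : Set ℂ := {z | ∃ T, IsResolvent A z T}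

/-- The spectrum of an unbounded operator. -/
def specP (A : H →ₗ.[ℂ] H) : Set ℂ := (resolventSetP A)ᶜ

/-- The resolvent `(A - z·I)⁻¹` (junk value `0` off the resolvent set). -/
def res (A : H →ₗ.[ℂ] H) (z : ℂ) : H →L[ℂ] H :=
  if h : ∃ T, IsResolvent A z T then h.choose else 0

/-- The operator `A + t·I` (same domain). -/
def shiftP (A : H →ₗ.[ℂ] H) (t : ℂ) : H →ₗ.[ℂ] H :=
  ⟨A.domain, A.toFun + t • A.domain.subtype⟩

/-- `A` is of positive type: `(-∞,0] ⊆ ρ(A)` and `sup_{t ≥ 0} ‖(1+t)(A+t)⁻¹‖ < ∞`. -/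
def IsPositiveTypeP (A : H →ₗ.[ℂ] H) : Prop :=
  (∀ x : ℝ, x ≤ 0 → (x : ℂ) ∈ resolventSetP A) ∧
  ∃ M : ℝ, ∀ t : ℝ, 0 ≤ t → (1 + t) * ‖res A (-(t : ℂ))‖ ≤ M

/-- The open sector of half-opening angle `ω` about the positive reals
(`(0,∞)` for `ω = 0`). -/
def sectorS (ω : ℝ) : Set ℂ :=
  if ω = 0 then (fun x : ℝ => (x : ℂ)) '' Set.Ioi 0
  else {z : ℂ | z ≠ 0 ∧ |Complex.arg z| < ω}

/-- `A` is sectorial of angle `ω`. -/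
def IsSectorialP (A : H →ₗ.[ℂ] H) (ω : ℝ) : Prop :=
  specP A ⊆ closure (sectorS ω) ∧
  ∀ ω' : ℝ, ω < ω' → ω' < Real.pi →
    ∃ M : ℝ, ∀ z ∈ (closure (sectorS ω'))ᶜ, ‖z‖ * ‖res A z‖ ≤ M

/-- The shifted sector `-t₀ + S_ω`. -/
def shiftedSector (t0 ω : ℝ) : Set ℂ := (fun w => -(t0 : ℂ) + w) '' sectorS ω

/-- The region `ℂ \ closure (-t₀ + S_ω)`. -/
def offSector (t0 ω : ℝ) : Set ℂ := (closure (shiftedSector t0 ω))ᶜ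

/-- The bounded operator `(A - z·I)^{-1/2}`, defined by the Balakrishnan-type formula
`(1/π) ∫₀^∞ t^{-1/2} (A + (t - z)·I)⁻¹ dt`. -/
def negSqrt (A : H →ₗ.[ℂ] H) (z : ℂ) : H →L[ℂ] H :=
  ((Real.pi : ℂ))⁻¹ • ∫ t in Set.Ioi (0 : ℝ), ((Real.sqrt t : ℂ))⁻¹ • res A (z - t)

/-- Trace-class (nuclear) bounded operators, characterized by
`sup { ∑ |⟨eᵢ, T fᵢ⟩| : (eᵢ), (fᵢ) finite orthonormal families } < ∞`. -/
def IsTraceClass (T : H →L[ℂ] H) : Prop :=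
  ∃ C : ℝ, ∀ (n : ℕ) (e f : Fin n → H), Orthonormal ℂ e → Orthonormal ℂ f →
    ∑ i, ‖⟪e i, T (f i)⟫_ℂ‖ ≤ C

/-- The trace norm `‖T‖₁`. -/
def traceNorm (T : H →L[ℂ] H) : ℝ :=
  sSup {s : ℝ | ∃ (n : ℕ) (e f : Fin n → H), Orthonormal ℂ e ∧ Orthonormal ℂ f ∧
    s = ∑ i, ‖⟪e i, T (f i)⟫_ℂ‖}

/-- The trace of a (trace-class) operator, computed in the Hilbert basis `b`. -/
def traceH (b : HilbertBasis ℕ ℂ H) (T : H →L[ℂ] H) : ℂ :=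
  ∑' n, ⟪(b n : H), T (b n)⟫_ℂ

/-- The Fredholm determinant `det (I + T)` (for `T` trace class), computed as the limit of
finite-section determinants along the Hilbert basis `b`. -/
def detI (b : HilbertBasis ℕ ℂ H) (T : H →L[ℂ] H) : ℂ :=
  limUnder atTop fun F : Finset ℕ =>
    Matrix.det (Matrix.of fun i j : F =>
      (if (i : ℕ) = (j : ℕ) then (1 : ℂ) else 0) + ⟪(b (i : ℕ) : H), T (b (j : ℕ))⟫_ℂ)


/-- The inverse square root `B^{-1/2}` of a bounded operator of positive type,
defined by `(1/π) ∫₀^∞ t^{-1/2} (B + t·I)⁻¹ dt`. -/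
def bNegSqrt (B : H →L[ℂ] H) : H →L[ℂ] H :=
  ((Real.pi : ℂ))⁻¹ •
    ∫ t in Set.Ioi (0 : ℝ), ((Real.sqrt t : ℂ))⁻¹ • Ring.inverse (B + (t : ℂ) • (1 : H →L[ℂ] H))

set_option linter.unusedSectionVars false
set_option maxHeartbeats 1000000
section statement4aux
open Set

section algebraAux

variable {A : Type*} [NormedRing A] [NormedAlgebra ℂ A] [CompleteSpace A]

lemma aux_smul_decomp (S : A) {d : ℂ} (hd : d ≠ 0) :
    (d : ℂ) • (1 : A) + S = d • ((1 : A) - (-(d⁻¹ • S))) := by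
  rw [sub_neg_eq_add, smul_add, smul_smul, mul_inv_cancel₀ hd, one_smul]

lemma aux_norm_w (S : A) {d : ℝ} (hS : ‖S‖ < 1) (hd : 1 ≤ d) :
    ‖(-(((d : ℂ))⁻¹ • S))‖ < 1 := by
  rw [norm_neg, norm_smul]
  have h1 : ‖((d:ℂ))⁻¹‖ ≤ 1 := by
    rw [norm_inv, Complex.norm_real, Real.norm_eq_abs, abs_of_nonneg (by linarith)]
    rw [inv_le_one_iff₀]; right; exact hd
  calc ‖((d:ℂ))⁻¹‖ * ‖S‖ ≤ 1 * ‖S‖ := mul_le_mul_of_nonneg_right h1 (norm_nonneg S)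
    _ = ‖S‖ := one_mul _
    _ < 1 := hS

/-- The unit `d•1 + S` for real `d ≥ 1`, `‖S‖ < 1`. -/
def shiftUnit (S : A) (hS : ‖S‖ < 1) (d : ℝ) (hd : 1 ≤ d) : Aˣ :=
  (Units.map (algebraMap ℂ A).toMonoidHom (Units.mk0 (d : ℂ)
      (by exact_mod_cast (by linarith : (0:ℝ) < d).ne'))) *
    Units.oneSub (-(((d : ℂ))⁻¹ • S)) (aux_norm_w S hS hd)

lemma shiftUnit_val (S : A) (hS : ‖S‖ < 1) (d : ℝ) (hd : 1 ≤ d) :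
    ((shiftUnit S hS d hd : Aˣ) : A) = (d : ℂ) • (1 : A) + S := by
  have hd0 : (d : ℂ) ≠ 0 := by exact_mod_cast (by linarith : (0:ℝ) < d).ne'
  rw [aux_smul_decomp S hd0]
  show algebraMap ℂ A (d : ℂ) * ((1 : A) - (-(((d : ℂ))⁻¹ • S))) = _
  rw [Algebra.algebraMap_eq_smul_one, smul_mul_assoc, one_mul]

lemma shift_isUnit (S : A) (hS : ‖S‖ < 1) (d : ℝ) (hd : 1 ≤ d) :
    IsUnit ((d : ℂ) • (1 : A) + S) :=
  ⟨shiftUnit S hS d hd, shiftUnit_val S hS d hd⟩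

lemma shift_inverse (S : A) (hS : ‖S‖ < 1) (d : ℝ) (hd : 1 ≤ d) :
    Ring.inverse ((d : ℂ) • (1 : A) + S) =
      ((d : ℂ))⁻¹ • ∑' n : ℕ, (-(((d : ℂ))⁻¹ • S)) ^ n := by
  rw [← shiftUnit_val S hS d hd, Ring.inverse_unit]
  rw [shiftUnit, mul_inv_rev]
  rw [Units.val_mul]
  have h2 : ((Units.oneSub (-(((d : ℂ))⁻¹ • S)) (aux_norm_w S hS hd))⁻¹ : Aˣ) =
      (∑' n : ℕ, (-(((d : ℂ))⁻¹ • S)) ^ n : A) := rfl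
  rw [h2, Units.coe_map_inv]
  show _ * algebraMap ℂ A _ = _
  have h3 : ((Units.mk0 ((d:ℂ)) (by exact_mod_cast (by linarith : (0:ℝ) < d).ne'))⁻¹ : ℂˣ) =
      ((d:ℂ))⁻¹ := rfl
  rw [h3, Algebra.algebraMap_eq_smul_one, mul_smul_comm, mul_one]

lemma shift_tsum_norm_le (h1 : ‖(1:A)‖ ≤ 1) (S : A) (hS : ‖S‖ < 1) (d : ℝ) (hd : 1 ≤ d) :
    ‖∑' n : ℕ, (-(((d : ℂ))⁻¹ • S)) ^ n‖ ≤ (1 - ‖S‖)⁻¹ := by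
  have hw := aux_norm_w S hS hd
  have hb := tsum_geometric_le_of_norm_lt_one _ hw
  have hw2 : ‖(-(((d : ℂ))⁻¹ • S))‖ ≤ ‖S‖ := by
    rw [norm_neg, norm_smul]
    have h2 : ‖((d:ℂ))⁻¹‖ ≤ 1 := by
      rw [norm_inv, Complex.norm_real, Real.norm_eq_abs, abs_of_nonneg (by linarith)]
      rw [inv_le_one_iff₀]; right; exact hd
    calc ‖((d:ℂ))⁻¹‖ * ‖S‖ ≤ 1 * ‖S‖ := mul_le_mul_of_nonneg_right h2 (norm_nonneg S)
      _ = ‖S‖ := one_mul _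
  have h3 : (1 - ‖(-(((d : ℂ))⁻¹ • S))‖)⁻¹ ≤ (1 - ‖S‖)⁻¹ := by
    have hS0 : 0 < 1 - ‖S‖ := by linarith
    gcongr
  linarith

end algebraAux


def aCoef (m : ℕ) : ℝ :=
  Real.Gamma ((m : ℝ) + 1/2) / (Real.Gamma ((m : ℝ) + 1) * Real.Gamma (1/2))

lemma aCoef_nonneg (m : ℕ) : 0 ≤ aCoef m := by
  have h1 : 0 < Real.Gamma ((m : ℝ) + 1/2) := Real.Gamma_pos_of_pos (by positivity)
  have h2 : 0 < Real.Gamma ((m : ℝ) + 1) := Real.Gamma_pos_of_pos (by positivity)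
  have h3 : 0 < Real.Gamma (1/2) := Real.Gamma_pos_of_pos (by norm_num)
  unfold aCoef
  positivity

lemma aCoef_zero : aCoef 0 = 1 := by
  have h3 : 0 < Real.Gamma (1/2) := Real.Gamma_pos_of_pos (by norm_num)
  simp only [aCoef, Nat.cast_zero, zero_add, Real.Gamma_one, one_mul]
  field_simp

lemma aCoef_succ (m : ℕ) :
    aCoef (m + 1) = aCoef m * (((m : ℝ) + 1/2) / ((m : ℝ) + 1)) := by
  have h2 : 0 < Real.Gamma ((m : ℝ) + 1) := Real.Gamma_pos_of_pos (by positivity)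
  have h3 : 0 < Real.Gamma (1/2) := Real.Gamma_pos_of_pos (by norm_num)
  have e1 : Real.Gamma (((m : ℕ) + 1 : ℕ) + 1/2) = ((m : ℝ) + 1/2) * Real.Gamma ((m : ℝ) + 1/2) := by
    push_cast
    rw [show (m : ℝ) + 1 + 1/2 = ((m : ℝ) + 1/2) + 1 by ring,
      Real.Gamma_add_one (by positivity)]
  have e2 : Real.Gamma (((m : ℕ) + 1 : ℕ) + 1) = ((m : ℝ) + 1) * Real.Gamma ((m : ℝ) + 1) := by
    push_cast
    rw [Real.Gamma_add_one (by positivity)]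
  rw [aCoef, aCoef, e1, e2]
  field_simp

lemma aCoef_le_one (m : ℕ) : aCoef m ≤ 1 := by
  induction m with
  | zero => rw [aCoef_zero]
  | succ n ih =>
    rw [aCoef_succ]
    have h1 : ((n : ℝ) + 1/2) / ((n : ℝ) + 1) ≤ 1 := by
      rw [div_le_one (by positivity)]; linarith
    calc aCoef n * (((n : ℝ) + 1/2) / ((n : ℝ) + 1)) ≤ 1 * 1 :=
        mul_le_mul ih h1 (by positivity) (by norm_num)
      _ = 1 := by norm_num

/-- the Beta-type integrand on `(0,1)`. -/
private def betaFn (m : ℕ) (u : ℝ) : ℝ := u ^ (-(1/2) : ℝ) * (1 - u) ^ ((m : ℝ) - 1/2)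

lemma betaFn_integrableOn (m : ℕ) : IntegrableOn (betaFn m) (Ioo (0:ℝ) 1) := by
  have hc : IntervalIntegrable
      (fun x : ℝ => (x : ℂ) ^ ((1/2 : ℂ) - 1) * ((1 : ℂ) - x) ^ (((m : ℂ) + 1/2) - 1))
      volume 0 1 :=
    Complex.betaIntegral_convergent (by norm_num) (by
      simp only [Complex.add_re, Complex.natCast_re]
      norm_num
      positivity)
  have hIoc : IntegrableOn
      (fun x : ℝ => (x : ℂ) ^ ((1/2 : ℂ) - 1) * ((1 : ℂ) - x) ^ (((m : ℂ) + 1/2) - 1))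
      (Ioc (0:ℝ) 1) := by
    rwa [intervalIntegrable_iff_integrableOn_Ioc_of_le (by norm_num)] at hc
  have hIoo := (hIoc.mono_set Ioo_subset_Ioc_self).norm
  refine IntegrableOn.congr_fun hIoo (fun x hx => ?_) measurableSet_Ioo
  obtain ⟨hx0, hx1⟩ := hx
  rw [norm_mul]
  rw [Complex.norm_cpow_eq_rpow_re_of_pos hx0]
  have h1x : (0:ℝ) < 1 - x := by linarith
  rw [show ((1 : ℂ) - (x:ℂ)) = (((1 - x : ℝ)) : ℂ) by push_cast; ring]
  rw [Complex.norm_cpow_eq_rpow_re_of_pos h1x]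
  simp only [Complex.sub_re, Complex.add_re, Complex.one_re, Complex.natCast_re]
  norm_num [betaFn]
  exact Or.inl (by congr 1; ring)

lemma betaFn_integral (m : ℕ) :
    ∫ u in Ioo (0:ℝ) 1, betaFn m u =
      Real.Gamma (1/2) * Real.Gamma ((m:ℝ) + 1/2) / Real.Gamma ((m:ℝ) + 1) := by
  have hu : 0 < Complex.re (1/2 : ℂ) := by norm_num
  have hv : 0 < Complex.re ((m : ℂ) + 1/2) := by
    simp only [Complex.add_re, Complex.natCast_re]
    norm_num
    positivity
  have hbeta := Complex.Gamma_mul_Gamma_eq_betaIntegral hu hv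
  have hsum : (1/2 : ℂ) + ((m:ℂ) + 1/2) = ((m : ℕ) : ℂ) + 1 := by push_cast; ring
  rw [hsum, Complex.Gamma_nat_eq_factorial] at hbeta
  -- identify betaIntegral with the real integral
  have hval : Complex.betaIntegral (1/2) ((m:ℂ) + 1/2) =
      ((∫ u in Ioo (0:ℝ) 1, betaFn m u : ℝ) : ℂ) := by
    rw [Complex.betaIntegral]
    rw [intervalIntegral.integral_of_le (by norm_num : (0:ℝ) ≤ 1)]
    rw [MeasureTheory.integral_Ioc_eq_integral_Ioo]
    rw [show ((∫ u in Ioo (0:ℝ) 1, betaFn m u : ℝ) : ℂ) =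
        ∫ u in Ioo (0:ℝ) 1, ((betaFn m u : ℝ) : ℂ) from (integral_ofReal (𝕜 := ℂ)).symm]
    apply setIntegral_congr_fun measurableSet_Ioo
    intro x hx
    obtain ⟨hx0, hx1⟩ := hx
    have h1x : (0:ℝ) < 1 - x := by linarith
    have e1 : (x : ℂ) ^ ((1/2 : ℂ) - 1) = ((x ^ (-(1/2):ℝ) : ℝ) : ℂ) := by
      rw [Complex.ofReal_cpow hx0.le]
      norm_num
    have e2 : ((1 : ℂ) - x) ^ (((m:ℂ) + 1/2) - 1) = (((1-x) ^ ((m:ℝ) - 1/2) : ℝ) : ℂ) := by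
      rw [Complex.ofReal_cpow h1x.le]
      push_cast
      ring_nf
    show (x:ℂ) ^ ((1/2:ℂ)-1) * ((1:ℂ)-x) ^ (((m:ℂ)+1/2)-1) = ((betaFn m x : ℝ):ℂ)
    rw [e1, e2, betaFn]
    push_cast
    ring
  rw [hval] at hbeta
  -- now take real parts
  have hG : ∀ x : ℝ, Complex.Gamma ((x : ℝ) : ℂ) = (Real.Gamma x : ℂ) := fun x =>
    Complex.Gamma_ofReal x
  have h12 : (1/2 : ℂ) = (((1:ℝ)/2 : ℝ) : ℂ) := by push_cast; ring
  have hm12 : ((m:ℂ) + 1/2) = ((((m:ℝ) + 1/2) : ℝ) : ℂ) := by push_cast; ring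
  rw [hm12, h12, hG, hG] at hbeta
  have hfac : (Real.Gamma ((m:ℝ) + 1) : ℂ) = ((m.factorial : ℕ) : ℂ) := by
    rw [show ((m:ℝ) + 1) = ((m:ℕ) : ℝ) + 1 by norm_num, Real.Gamma_nat_eq_factorial]
    push_cast
    ring
  have hGm1 : Real.Gamma ((m:ℝ) + 1) ≠ 0 := (Real.Gamma_pos_of_pos (by positivity)).ne'
  have hcast : ((Real.Gamma ((m:ℝ) + 1) : ℝ) : ℂ) ≠ 0 := Complex.ofReal_ne_zero.mpr hGm1
  apply Complex.ofReal_injective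
  rw [Complex.ofReal_div, Complex.ofReal_mul]
  rw [eq_div_iff hcast, hfac]
  linear_combination -hbeta

private def phiCV (u : ℝ) : ℝ := u / (1 - u)

lemma phiCV_hasDeriv : ∀ u ∈ Ioo (0:ℝ) 1,
    HasDerivWithinAt phiCV (((1-u)^2)⁻¹) (Ioo (0:ℝ) 1) u := by
  intro u hu
  obtain ⟨h0, h1⟩ := hu
  have hne : (1 - u) ≠ 0 := (by linarith : (0:ℝ) < 1 - u).ne'
  have hd : HasDerivAt phiCV (((1-u)^2)⁻¹) u := by
    have h2 : HasDerivAt (fun y : ℝ => 1 - y) (-1) u := by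
      simpa using (hasDerivAt_id u).const_sub 1
    have h3 := h2.inv hne
    have h4 := (hasDerivAt_id u).div h2 hne
    refine h4.congr_deriv ?_
    simp only [id_eq]; ring
  exact hd.hasDerivWithinAt

lemma phiCV_inj : InjOn phiCV (Ioo (0:ℝ) 1) := by
  intro u hu v hv h
  obtain ⟨hu0, hu1⟩ := hu
  obtain ⟨hv0, hv1⟩ := hv
  rw [phiCV, phiCV, div_eq_div_iff (by linarith) (by linarith)] at h
  nlinarith

lemma phiCV_image : phiCV '' (Ioo (0:ℝ) 1) = Ioi (0:ℝ) := by
  ext t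
  constructor
  · rintro ⟨u, ⟨h0, h1⟩, rfl⟩
    exact div_pos h0 (by linarith)
  · intro ht
    have ht' : (0:ℝ) < t := ht
    refine ⟨t / (1 + t), ⟨div_pos ht' (by linarith), ?_⟩, ?_⟩
    · rw [div_lt_one (by linarith)]; linarith
    · rw [phiCV]
      have h1t : (1 + t) ≠ 0 := by positivity
      field_simp
      ring

lemma smul_g_eq_betaFn (m : ℕ) : ∀ u ∈ Ioo (0:ℝ) 1,
    |((1-u)^2)⁻¹| • ((Real.sqrt (phiCV u))⁻¹ * ((1 + phiCV u)^(m+1))⁻¹) = betaFn m u := by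
  intro u hu
  obtain ⟨h0, h1⟩ := hu
  have h1u : (0:ℝ) < 1 - u := by linarith
  have hne : (1 - u) ≠ 0 := h1u.ne'
  have e0 : 1 + phiCV u = (1 - u)⁻¹ := by rw [phiCV]; field_simp; ring
  have e1 : Real.sqrt (phiCV u) = Real.sqrt u / Real.sqrt (1 - u) := by
    rw [phiCV, Real.sqrt_div h0.le]
  rw [e0, e1, smul_eq_mul]
  rw [abs_of_pos (by positivity)]
  rw [betaFn]
  -- convert to rpow
  have hsu : Real.sqrt u = u ^ ((1:ℝ)/2) := Real.sqrt_eq_rpow u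
  have hs1u : Real.sqrt (1-u) = (1-u) ^ ((1:ℝ)/2) := Real.sqrt_eq_rpow _
  have hpow : ((1 - u)⁻¹ ^ (m+1))⁻¹ = (1-u) ^ ((m:ℝ) + 1) := by
    rw [← inv_pow, inv_inv, ← Real.rpow_natCast (1-u) (m+1)]
    push_cast
    ring_nf
  have hsq : (((1-u)^2)⁻¹ : ℝ) = (1-u) ^ (-(2:ℝ)) := by
    rw [← Real.rpow_natCast (1-u) 2, ← Real.rpow_neg h1u.le]
    norm_num
  rw [hpow, hsq, hsu, hs1u]
  rw [div_eq_mul_inv, mul_inv, inv_inv, ← Real.rpow_neg h0.le]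
  rw [show (1-u) ^ (-(2:ℝ)) * (u ^ (-((1:ℝ)/2)) * (1-u)^((1:ℝ)/2) * (1-u)^((m:ℝ)+1)) =
    u ^ (-((1:ℝ)/2)) * ((1-u) ^ (-(2:ℝ)) * (1-u)^((1:ℝ)/2) * (1-u)^((m:ℝ)+1)) by ring]
  rw [← Real.rpow_add h1u, ← Real.rpow_add h1u]
  norm_num
  left
  congr 1
  ring

lemma J_integrable (m : ℕ) :
    IntegrableOn (fun t : ℝ => (Real.sqrt t)⁻¹ * ((1+t)^(m+1))⁻¹) (Ioi (0:ℝ)) := by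
  rw [← phiCV_image, integrableOn_image_iff_integrableOn_abs_deriv_smul
    measurableSet_Ioo phiCV_hasDeriv phiCV_inj]
  exact (betaFn_integrableOn m).congr_fun
    (fun u hu => (smul_g_eq_betaFn m u hu).symm) measurableSet_Ioo

lemma J_integral (m : ℕ) :
    ∫ t in Ioi (0:ℝ), (Real.sqrt t)⁻¹ * ((1+t)^(m+1))⁻¹ = Real.pi * aCoef m := by
  rw [← phiCV_image, integral_image_eq_integral_abs_deriv_smul
    measurableSet_Ioo phiCV_hasDeriv phiCV_inj]
  rw [setIntegral_congr_fun measurableSet_Ioo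
    (fun u hu => smul_g_eq_betaFn m u hu)]
  rw [betaFn_integral m, aCoef]
  have h2 : 0 < Real.Gamma ((m : ℝ) + 1) := Real.Gamma_pos_of_pos (by positivity)
  have h3 : Real.Gamma (1/2) = Real.sqrt Real.pi := Real.Gamma_one_half_eq
  have hpi : Real.pi = Real.Gamma (1/2) * Real.Gamma (1/2) := by
    rw [h3, Real.mul_self_sqrt Real.pi_pos.le]
  rw [hpi]
  have h3' : Real.Gamma (1/2) ≠ 0 := by
    rw [h3]; positivity
  field_simp

section op

local notation "Op" => H →L[ℂ] H

lemma op_norm_one_le : ‖(1 : Op)‖ ≤ 1 := by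
  rw [ContinuousLinearMap.one_def]
  exact ContinuousLinearMap.norm_id_le

lemma op_norm_pow_le (R : Op) (m : ℕ) : ‖R ^ m‖ ≤ ‖R‖ ^ m := by
  cases m with
  | zero => simpa using op_norm_one_le
  | succ n => exact norm_pow_le' R (Nat.succ_pos n)

/-- expansion of the resolvent integrand as a geometric series. -/
lemma integrand_eq (R : Op) (c : ℂ) (hc : ‖c‖ * ‖R‖ < 1) {t : ℝ} (ht : 0 < t) :
    ((Real.sqrt t : ℂ))⁻¹ • Ring.inverse ((1 : Op) + c • R + (t : ℂ) • (1 : Op)) =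
      ∑' m : ℕ, ((((Real.sqrt t)⁻¹ * ((1+t)^(m+1))⁻¹ : ℝ)) : ℂ) •
        ((((-1 : ℂ)) ^ m * c ^ m) • R ^ m) := by
  have hS : ‖c • R‖ < 1 := by rw [norm_smul]; exact hc
  have hd : (1:ℝ) ≤ 1 + t := by linarith
  have hd0 : ((1 + t : ℝ) : ℂ) ≠ 0 := by
    exact_mod_cast (by linarith : (0:ℝ) < 1 + t).ne'
  have he : (1 : Op) + c • R + (t : ℂ) • (1 : Op) = ((1 + t : ℝ) : ℂ) • (1 : Op) + c • R := by
    push_cast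
    rw [add_smul, one_smul]
    abel
  rw [he, shift_inverse (c • R) hS (1 + t) hd]
  have hw : (-((((1 + t : ℝ) : ℂ))⁻¹ • (c • R))) = (-((((1 + t : ℝ) : ℂ))⁻¹ * c)) • R := by
    rw [smul_smul, ← neg_smul]
  rw [hw]
  have hwn : ‖(-((((1 + t : ℝ) : ℂ))⁻¹ * c)) • R‖ < 1 := by
    rw [norm_smul, norm_neg, norm_mul]
    have h2 : ‖(((1 + t : ℝ) : ℂ))⁻¹‖ ≤ 1 := by
      rw [norm_inv, Complex.norm_real, Real.norm_eq_abs, abs_of_nonneg (by linarith)]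
      rw [inv_le_one_iff₀]; right; exact hd
    calc ‖(((1+t:ℝ):ℂ))⁻¹‖ * ‖c‖ * ‖R‖ ≤ 1 * ‖c‖ * ‖R‖ := by
          have := mul_le_mul_of_nonneg_right h2 (norm_nonneg c)
          exact mul_le_mul_of_nonneg_right this (norm_nonneg R)
      _ = ‖c‖ * ‖R‖ := by ring
      _ < 1 := hc
  have hgeom : Summable (fun n : ℕ => ((-((((1 + t : ℝ) : ℂ))⁻¹ * c)) • R) ^ n) :=
    summable_geometric_of_norm_lt_one hwn
  rw [smul_smul]
  rw [← (hgeom.hasSum.const_smul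
    (((Real.sqrt t : ℂ))⁻¹ * (((1 + t : ℝ) : ℂ))⁻¹)).tsum_eq]
  refine tsum_congr fun n => ?_
  rw [smul_pow, smul_smul, smul_smul]
  congr 1
  have hst : (0:ℝ) < Real.sqrt t := Real.sqrt_pos.mpr ht
  push_cast [mul_pow, inv_pow]
  rw [neg_pow]
  field_simp
  rw [div_pow, div_div, pow_succ]; congr 1; ring

/-- The main expansion lemma: binomial series for `B^{-1/2}`, `B = 1 + c•R`. -/
lemma key_hasSum (R : Op) (c : ℂ) (hc : ‖c‖ * ‖R‖ < 1) :
    HasSum (fun m : ℕ => (((aCoef m : ℝ) : ℂ) * (-1) ^ m * c ^ m) • R ^ m)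
      (bNegSqrt ((1 : Op) + c • R)) := by
  set q : ℝ := ‖c‖ * ‖R‖ with hqdef
  have hq0 : 0 ≤ q := by positivity
  set v : ℕ → Op := fun m => ((((-1 : ℂ)) ^ m * c ^ m) • R ^ m) with hv
  have hvle : ∀ m, ‖v m‖ ≤ q ^ m := by
    intro m
    rw [hv]
    calc ‖(((-1 : ℂ)) ^ m * c ^ m) • R ^ m‖ = ‖((-1 : ℂ)) ^ m * c ^ m‖ * ‖R ^ m‖ :=
          norm_smul _ _
      _ ≤ ‖c‖ ^ m * ‖R‖ ^ m := by
          rw [norm_mul, norm_pow, norm_pow]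
          simp only [norm_neg, norm_one, one_pow, one_mul]
          exact mul_le_mul_of_nonneg_left (op_norm_pow_le R m) (by positivity)
      _ = q ^ m := by rw [hqdef, mul_pow]
  set F : ℕ → ℝ → Op := fun m t =>
    ((((Real.sqrt t)⁻¹ * ((1+t)^(m+1))⁻¹ : ℝ)) : ℂ) • v m with hF
  -- measurability
  have hmeas : ∀ m, AEStronglyMeasurable (F m) (volume.restrict (Ioi (0:ℝ))) := by
    intro m
    have hφ : Measurable (fun t : ℝ => ((((Real.sqrt t)⁻¹ * ((1+t)^(m+1))⁻¹ : ℝ)) : ℂ)) := by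
      apply Complex.measurable_ofReal.comp
      exact (Real.continuous_sqrt.measurable.inv).mul
        (((continuous_const.add continuous_id).pow (m+1)).measurable.inv)
    exact (hφ.aestronglyMeasurable).smul_const (v m)
  -- integrability
  have hInt : ∀ m, Integrable (F m) (volume.restrict (Ioi (0:ℝ))) := by
    intro m
    exact ((J_integrable m).ofReal (𝕜 := ℂ)).smul_const (v m)
  -- value of each integral
  have hIval : ∀ m, ∫ t in Ioi (0:ℝ), F m t = (((Real.pi * aCoef m : ℝ)) : ℂ) • v m := by
    intro m
    rw [hF]
    rw [integral_smul_const]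
    congr 1
    rw [show ∫ t in Ioi (0:ℝ), ((((Real.sqrt t)⁻¹ * ((1+t)^(m+1))⁻¹ : ℝ)) : ℂ) =
        ((∫ t in Ioi (0:ℝ), ((Real.sqrt t)⁻¹ * ((1+t)^(m+1))⁻¹ : ℝ) : ℝ) : ℂ) from
      integral_ofReal (𝕜 := ℂ)]
    rw [J_integral m]
  -- norm of each integral summand
  have hnorm : ∀ m, ∫ t in Ioi (0:ℝ), ‖F m t‖ = Real.pi * aCoef m * ‖v m‖ := by
    intro m
    have : ∀ t ∈ Ioi (0:ℝ), ‖F m t‖ = ((Real.sqrt t)⁻¹ * ((1+t)^(m+1))⁻¹) * ‖v m‖ := by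
      intro t ht
      have ht' : (0:ℝ) < t := ht
      rw [hF, norm_smul, Complex.norm_real, Real.norm_eq_abs, abs_of_nonneg (by positivity)]
    rw [setIntegral_congr_fun measurableSet_Ioi this, integral_mul_const, J_integral m]
  -- summability of the majorant
  have hmaj : Summable (fun m : ℕ => Real.pi * aCoef m * ‖v m‖) := by
    apply Summable.of_nonneg_of_le
      (fun m => by
        have := aCoef_nonneg m
        positivity)
      (fun m => ?_) ((summable_geometric_of_lt_one hq0 hc).mul_left Real.pi)
    calc Real.pi * aCoef m * ‖v m‖ ≤ Real.pi * 1 * (q ^ m) := by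
          apply mul_le_mul
          · exact mul_le_mul_of_nonneg_left (aCoef_le_one m) Real.pi_pos.le
          · exact hvle m
          · exact norm_nonneg _
          · positivity
      _ = Real.pi * q ^ m := by ring
  -- the lintegral bound for integral_tsum
  have hlin : ∑' m, ∫⁻ t in Ioi (0:ℝ), ‖F m t‖₊ ≠ ⊤ := by
    have heq : ∀ m, ∫⁻ t in Ioi (0:ℝ), ‖F m t‖₊ = ENNReal.ofReal (Real.pi * aCoef m * ‖v m‖) := by
      intro m
      change ∫⁻ t in Ioi (0:ℝ), ‖F m t‖ₑ = _
      rw [← ofReal_integral_norm_eq_lintegral_enorm (hInt m), hnorm m]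
    rw [tsum_congr heq, ← ENNReal.ofReal_tsum_of_nonneg
      (fun m => by have := aCoef_nonneg m; positivity) hmaj]
    exact ENNReal.ofReal_ne_top
  -- apply integral_tsum
  have hitsum : ∫ t in Ioi (0:ℝ), ∑' m, F m t = ∑' m, ∫ t in Ioi (0:ℝ), F m t :=
    integral_tsum hmeas hlin
  -- rewrite bNegSqrt
  have hbn : bNegSqrt ((1 : Op) + c • R) =
      ((Real.pi : ℂ))⁻¹ • ∑' m, (((Real.pi * aCoef m : ℝ)) : ℂ) • v m := by
    rw [bNegSqrt]
    congr 1
    rw [setIntegral_congr_fun measurableSet_Ioi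
      (fun t ht => integrand_eq R c hc (mem_Ioi.mp ht))]
    rw [hitsum]
    exact tsum_congr hIval
  -- summability of the scaled series
  have hsummable : Summable (fun m : ℕ => (((Real.pi * aCoef m : ℝ)) : ℂ) • v m) := by
    apply Summable.of_norm_bounded hmaj
    intro m
    rw [norm_smul, Complex.norm_real, Real.norm_eq_abs,
      abs_of_nonneg (by have := aCoef_nonneg m; positivity)]
  have hfinal := hsummable.hasSum.const_smul ((Real.pi : ℂ))⁻¹
  rw [← hbn] at hfinal
  have hfun : (fun m : ℕ => ((Real.pi : ℂ))⁻¹ • (((Real.pi * aCoef m : ℝ)) : ℂ) • v m) =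
      (fun m : ℕ => (((aCoef m : ℝ) : ℂ) * (-1) ^ m * c ^ m) • R ^ m) := by
    funext m
    rw [hv, smul_smul, smul_smul]
    congr 1
    have hpi : (Real.pi : ℂ) ≠ 0 := by exact_mod_cast Real.pi_ne_zero
    push_cast
    field_simp
  rwa [hfun] at hfinal

end op


section parts

local notation "Op" => H →L[ℂ] H

lemma part1 (S : Op) (hS : ‖S‖ < 1) (x : ℝ) (hx : x ≤ 0) :
    (x : ℂ) ∈ resolventSet ℂ ((1 : Op) + S) := by
  rw [spectrum.mem_resolventSet_iff]
  have h := shift_isUnit S hS (1 - x) (by linarith)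
  have heq : algebraMap ℂ Op (x : ℂ) - ((1 : Op) + S) =
      -(((1 - x : ℝ) : ℂ) • (1 : Op) + S) := by
    rw [Algebra.algebraMap_eq_smul_one]
    push_cast
    rw [sub_smul, one_smul]
    abel
  rw [heq]
  exact h.neg

lemma part2 (S : Op) (hS : ‖S‖ < 1) (t : ℝ) (ht : 0 ≤ t) :
    ‖((1 : ℂ) + (t : ℂ)) • Ring.inverse ((1 : Op) + S + (t : ℂ) • (1 : Op))‖ ≤ (1 - ‖S‖)⁻¹ := by
  have hd : (1:ℝ) ≤ 1 + t := by linarith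
  have he : (1 : Op) + S + (t : ℂ) • (1 : Op) = ((1 + t : ℝ) : ℂ) • (1 : Op) + S := by
    push_cast
    rw [add_smul, one_smul]
    abel
  rw [he, shift_inverse S hS (1+t) hd, smul_smul]
  have hd0 : ((1 + t : ℝ) : ℂ) ≠ 0 := by
    exact_mod_cast (by linarith : (0:ℝ) < 1 + t).ne'
  have h1 : ((1:ℂ) + (t:ℂ)) * (((1 + t : ℝ) : ℂ))⁻¹ = 1 := by
    rw [show ((1:ℂ) + (t:ℂ)) = ((1 + t : ℝ) : ℂ) by push_cast; ring]
    exact mul_inv_cancel₀ hd0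
  rw [h1, one_smul]
  exact shift_tsum_norm_le op_norm_one_le S hS (1+t) hd

lemma part4 (R : Op) (hR : 0 < ‖R‖) (z1 : ℂ) :
    DifferentiableOn ℂ (fun w => bNegSqrt ((1 : Op) + (z1 - w) • R))
      (Metric.ball z1 ‖R‖⁻¹) := by
  have hball : ∀ w ∈ Metric.ball z1 ‖R‖⁻¹, ‖z1 - w‖ * ‖R‖ < 1 := by
    intro w hw
    rw [Metric.mem_ball] at hw
    have h1 : ‖z1 - w‖ < ‖R‖⁻¹ := by
      rw [← dist_eq_norm, dist_comm]
      exact hw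
    calc ‖z1 - w‖ * ‖R‖ < ‖R‖⁻¹ * ‖R‖ := mul_lt_mul_of_pos_right h1 hR
      _ = 1 := inv_mul_cancel₀ hR.ne'
  have hdiffG : DifferentiableOn ℂ
      (fun w => ∑' m : ℕ, (((aCoef m : ℝ) : ℂ) * (-1) ^ m * (z1 - w) ^ m) • R ^ m)
      (Metric.ball z1 ‖R‖⁻¹) := by
    intro w0 hw0
    apply DifferentiableAt.differentiableWithinAt
    rw [Metric.mem_ball] at hw0
    obtain ⟨ρ', hw0ρ', hρ'lt⟩ := exists_between hw0
    have hρ'0 : 0 < ρ' := lt_of_le_of_lt dist_nonneg hw0ρ'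
    have hq'0 : 0 < ρ' * ‖R‖ := by positivity
    have hq'1 : ρ' * ‖R‖ < 1 := by
      calc ρ' * ‖R‖ < ‖R‖⁻¹ * ‖R‖ := mul_lt_mul_of_pos_right hρ'lt hR
        _ = 1 := inv_mul_cancel₀ hR.ne'
    have husum : Summable (fun m : ℕ => (‖R‖ / (ρ' * ‖R‖)) * ((m : ℝ) * (ρ' * ‖R‖) ^ m)) := by
      apply Summable.mul_left
      have := summable_pow_mul_geometric_of_norm_lt_one (R := ℝ) 1
        (r := ρ' * ‖R‖) (by rwa [Real.norm_eq_abs, abs_of_pos hq'0])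
      simpa using this
    have hderiv : ∀ (m : ℕ), ∀ w ∈ Metric.ball z1 ρ',
        HasDerivAt (fun w => (((aCoef m : ℝ) : ℂ) * (-1) ^ m * (z1 - w) ^ m) • R ^ m)
          (((((aCoef m : ℝ) : ℂ) * (-1) ^ m) * ((m : ℂ) * (z1 - w) ^ (m - 1) * (-1))) • R ^ m)
          w := by
      intro m w _
      have h1 : HasDerivAt (fun w : ℂ => z1 - w) (-1) w := (hasDerivAt_id w).const_sub z1
      have h2 := h1.pow m
      have h3 := h2.const_mul (((aCoef m : ℝ) : ℂ) * (-1) ^ m)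
      have h4 := h3.smul_const (R ^ m)
      exact h4
    have hbound : ∀ (m : ℕ), ∀ w ∈ Metric.ball z1 ρ',
        ‖((((aCoef m : ℝ) : ℂ) * (-1) ^ m) * ((m : ℂ) * (z1 - w) ^ (m - 1) * (-1))) • R ^ m‖
          ≤ (‖R‖ / (ρ' * ‖R‖)) * ((m : ℝ) * (ρ' * ‖R‖) ^ m) := by
      intro m w hw
      have hzw : ‖z1 - w‖ ≤ ρ' := by
        rw [← dist_eq_norm, dist_comm]
        exact (Metric.mem_ball.mp hw).le
      cases m with
      | zero => simp
      | succ n =>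
        have hA : |aCoef (n+1)| ≤ 1 := by
          rw [abs_of_nonneg (aCoef_nonneg _)]; exact aCoef_le_one _
        have hzwn : ‖z1 - w‖ ^ n ≤ ρ' ^ n := pow_le_pow_left₀ (norm_nonneg _) hzw n
        have e : ‖((((aCoef (n+1) : ℝ) : ℂ) * (-1) ^ (n+1)) *
            (((n+1 : ℕ) : ℂ) * (z1 - w) ^ ((n+1) - 1) * (-1)))‖
            = |aCoef (n+1)| * (((n+1 : ℕ) : ℝ) * ‖z1 - w‖ ^ n) := by
          simp only [norm_mul, norm_pow, norm_neg, norm_one, one_pow, one_mul, mul_one,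
            Complex.norm_natCast, Complex.norm_real, Real.norm_eq_abs, Nat.add_sub_cancel]
        have h7 : ‖((((aCoef (n+1) : ℝ) : ℂ) * (-1) ^ (n+1)) *
            (((n+1 : ℕ) : ℂ) * (z1 - w) ^ ((n+1) - 1) * (-1)))‖
            ≤ ((n+1 : ℕ) : ℝ) * ρ' ^ n := by
          rw [e]
          calc |aCoef (n+1)| * (((n+1 : ℕ) : ℝ) * ‖z1 - w‖ ^ n)
              ≤ 1 * (((n+1 : ℕ) : ℝ) * ρ' ^ n) := by
                apply mul_le_mul hA _ (by positivity) (by norm_num)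
                exact mul_le_mul_of_nonneg_left hzwn (by positivity)
            _ = ((n+1 : ℕ) : ℝ) * ρ' ^ n := one_mul _
        have hueq : (‖R‖ / (ρ' * ‖R‖)) * (((n+1 : ℕ) : ℝ) * (ρ' * ‖R‖) ^ (n+1))
            = (((n+1 : ℕ) : ℝ) * ρ' ^ n) * ‖R‖ ^ (n+1) := by
          rw [mul_pow]
          rw [pow_succ ρ' n]
          field_simp
        rw [norm_smul, hueq]
        exact mul_le_mul h7 (op_norm_pow_le R (n+1)) (norm_nonneg _) (by positivity)
    have hsum0 : Summable (fun m : ℕ =>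
        (((aCoef m : ℝ) : ℂ) * (-1) ^ m * (z1 - z1) ^ m) • R ^ m) := by
      apply summable_of_ne_finset_zero (s := {0})
      intro m hm
      have hm' : m ≠ 0 := by simpa using hm
      rw [sub_self, zero_pow hm', mul_zero, zero_smul]
    have hd := hasDerivAt_tsum_of_isPreconnected husum Metric.isOpen_ball
      (convex_ball z1 ρ').isPreconnected hderiv hbound
      (Metric.mem_ball_self hρ'0) hsum0 (Metric.mem_ball.mpr hw0ρ')
    exact hd.differentiableAt
  apply hdiffG.congr
  intro w hw
  exact ((key_hasSum R (z1 - w) (hball w hw)).tsum_eq).symm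

end parts

end statement4aux

/-- for `z, z₁ ∈ ℂ \ closure(-t₀ + S_{ω₀})` with
`|z - z₁| < ‖(A₀ - z₁)⁻¹‖⁻¹`, the operator `B = I + (z₁ - z)(A₀ - z₁)⁻¹` is of positive
type and `B^{-1/2}` is given by the binomial series
`∑ₘ (Γ(m+1/2)/(Γ(m+1)Γ(1/2))) (-1)^m (z₁-z)^m (A₀ - z₁)^{-m}`;
in particular `z ↦ B^{-1/2}` is analytic in operator norm on the disk. -/
theorem statement4
    (A0 : H →ₗ.[ℂ] H) (t0 ω0 : ℝ) (z z1 : ℂ)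
    (hdense : Dense (A0.domain : Set H)) (hclosed : IsClosed (A0.graph : Set (H × H)))
    (hω0 : 0 ≤ ω0) (hω0' : ω0 < Real.pi)
    (hpos : IsPositiveTypeP (shiftP A0 (t0 : ℂ)))
    (hsect : IsSectorialP (shiftP A0 (t0 : ℂ)) ω0)
    (hz : z ∈ offSector t0 ω0) (hz1 : z1 ∈ offSector t0 ω0)
    (hlt : ‖z - z1‖ < ‖res A0 z1‖⁻¹) :
    (∀ x : ℝ, x ≤ 0 →
      (x : ℂ) ∈ resolventSet ℂ ((1 : H →L[ℂ] H) + (z1 - z) • res A0 z1)) ∧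
    (∃ M : ℝ, ∀ t : ℝ, 0 ≤ t →
      ‖((1 : ℂ) + (t : ℂ)) • Ring.inverse
          ((1 : H →L[ℂ] H) + (z1 - z) • res A0 z1 + (t : ℂ) • (1 : H →L[ℂ] H))‖ ≤ M) ∧
    HasSum
      (fun m : ℕ =>
        (((Real.Gamma ((m : ℝ) + 1/2) / (Real.Gamma ((m : ℝ) + 1) * Real.Gamma (1/2)) : ℝ) : ℂ) *
            (-1) ^ m * (z1 - z) ^ m) • (res A0 z1) ^ m)
      (bNegSqrt ((1 : H →L[ℂ] H) + (z1 - z) • res A0 z1)) ∧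
    DifferentiableOn ℂ (fun w => bNegSqrt ((1 : H →L[ℂ] H) + (z1 - w) • res A0 z1))
      (Metric.ball z1 ‖res A0 z1‖⁻¹) := by
  have hR : 0 < ‖res A0 z1‖ := by
    rcases lt_or_ge 0 ‖res A0 z1‖ with h | h
    · exact h
    · exfalso
      have h0 : ‖res A0 z1‖ = 0 := le_antisymm h (norm_nonneg _)
      rw [h0, inv_zero] at hlt
      exact absurd hlt (norm_nonneg _).not_gt
  have hc : ‖z1 - z‖ * ‖res A0 z1‖ < 1 := by
    rw [norm_sub_rev]
    calc ‖z - z1‖ * ‖res A0 z1‖ < ‖res A0 z1‖⁻¹ * ‖res A0 z1‖ :=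
        mul_lt_mul_of_pos_right hlt hR
      _ = 1 := inv_mul_cancel₀ hR.ne'
  have hS : ‖(z1 - z) • res A0 z1‖ < 1 := by rw [norm_smul]; exact hc
  exact ⟨fun x hx => part1 _ hS x hx,
    ⟨(1 - ‖(z1 - z) • res A0 z1‖)⁻¹, fun t ht => part2 _ hS t ht⟩,
    key_hasSum _ _ hc, part4 _ hR z1⟩

end
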